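/- Let K₁, K₂ > 0, let C_l, C_r < 1, let f_l, f_r be reals, and let R be a real with R*K₂ ≠ K₁. Define the constant q_s = (R - 1)/(R/K₁ - 1/K₂), Λ_U = (f_l - q_s)/(C_l - 1), Λ_L = (q_s - f_r)/(1 - C_r), and suppose Λ_U = R * Λ_L and Λ_L ≠ 0. Define the linear shock trajectories ζ_U(τ) = Λ_U * τ and ζ_L(τ) = Λ_L * τ. Then for every τ > 0: (i) the harmonic-mean flux (ζ_U(τ) - ζ_L(τ)) / (ζ_U(τ)/K₁ - ζ_L(τ)/K₂) is well defined and equals q_s; and (ii) ζ_U and ζ_L solve the coupled system dζ_U/dτ = (f_l - Q(τ))/(C_l - 1) and dζ_L/dτ = (Q(τ) - f_r)/(1 - C_r), where Q(τ) = (ζ_U(τ) - ζ_L(τ))/(ζ_U(τ)/K₁ - ζ_L(τ)/K₂). In particular both shock speeds are constant in time before ponding. -/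
import Mathlib


/-- With constant saturated-region flux `q_s = (R-1)/(R/K₁ - 1/K₂)` and constant shock
speeds `Λ_U = (f_l - q_s)/(C_l - 1)`, `Λ_L = (q_s - f_r)/(1 - C_r)` satisfying
`Λ_U = R * Λ_L`, the linear shock trajectories `ζ_U(τ) = Λ_U τ`, `ζ_L(τ) = Λ_L τ`
(i) make the depth-weighted harmonic-mean flux well defined and equal to `q_s` for all
`τ > 0`, and (ii) solve the coupled Rankine–Hugoniot ODE system
`dζ_U/dτ = (f_l - Q(τ))/(C_l - 1)`, `dζ_L/dτ = (Q(τ) - f_r)/(1 - C_r)` with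
`Q(τ) = (ζ_U - ζ_L)/(ζ_U/K₁ - ζ_L/K₂)`; in particular both shock speeds are constant
in time before ponding. -/
theorem linear_shocks_solve_saturated_system (K₁ K₂ Cl Cr fl fr R qs ΛU ΛL : ℝ)
    (hK₁ : 0 < K₁) (hK₂ : 0 < K₂) (hCl : Cl < 1) (hCr : Cr < 1)
    (hRK : R * K₂ ≠ K₁)
    (hqs : qs = (R - 1) / (R / K₁ - 1 / K₂))
    (hΛU : ΛU = (fl - qs) / (Cl - 1))
    (hΛL : ΛL = (qs - fr) / (1 - Cr))
    (hratio : ΛU = R * ΛL) (hΛL0 : ΛL ≠ 0) :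
    ∀ τ : ℝ, 0 < τ →
      ((ΛU * τ) / K₁ - (ΛL * τ) / K₂ ≠ 0 ∧
        (ΛU * τ - ΛL * τ) / ((ΛU * τ) / K₁ - (ΛL * τ) / K₂) = qs) ∧
      HasDerivAt (fun t : ℝ => ΛU * t)
        ((fl - (ΛU * τ - ΛL * τ) / ((ΛU * τ) / K₁ - (ΛL * τ) / K₂)) / (Cl - 1)) τ ∧
      HasDerivAt (fun t : ℝ => ΛL * t)
        (((ΛU * τ - ΛL * τ) / ((ΛU * τ) / K₁ - (ΛL * τ) / K₂) - fr) / (1 - Cr)) τ := by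

  intro τ hτ
  have hden : R / K₁ - 1 / K₂ ≠ 0 := by
    intro h
    apply hRK
    field_simp at h
    linarith
  have hQ : (ΛU * τ - ΛL * τ) / ((ΛU * τ) / K₁ - (ΛL * τ) / K₂) = qs := by
    have : (ΛU * τ - ΛL * τ) / ((ΛU * τ) / K₁ - (ΛL * τ) / K₂)
        = (ΛL * τ * (R - 1)) / (ΛL * τ * (R / K₁ - 1 / K₂)) := by
      rw [hratio]; ring_nf
    rw [this, mul_div_mul_left _ _ (mul_ne_zero hΛL0 (ne_of_gt hτ)), hqs]
  have hdne : (ΛU * τ) / K₁ - (ΛL * τ) / K₂ ≠ 0 := by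
    rw [hratio]
    have : R * ΛL * τ / K₁ - ΛL * τ / K₂ = ΛL * τ * (R / K₁ - 1 / K₂) := by ring
    rw [this]
    exact mul_ne_zero (mul_ne_zero hΛL0 (ne_of_gt hτ)) hden
  refine ⟨⟨hdne, hQ⟩, ?_, ?_⟩
  · have h := (hasDerivAt_id τ).const_mul ΛU
    simpa [hQ, ← hΛU] using h
  · have h := (hasDerivAt_id τ).const_mul ΛL
    simpa [hQ, ← hΛL] using h
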